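/- Let V be a Hilbert space, A: V → V* bounded (C_b) and coercive (C_a), 𝒦 ⊂ V a closed convex cone, and L: V → V Lipschitz with constant C_L < C_a/C_b. For d ∈ V*, let α(d) denote the unique solution of the QVI: α ∈ L(α) + 𝒦, ⟨Aα − d, α − v⟩ ≤ 0 for all v ∈ L(α) + 𝒦. Then the map d ↦ α(d) is continuous from V* to V; in fact, if d_j → d in V*, then ‖α(d_j) − α(d_k)‖_V ≤ (1 + C_L) ‖d_j − d_k‖_{V*} / (C_a − C_b C_L) for all j,k, so α(d_j) → α(d) strongly in V. -/
import Mathlib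


open Filter Topology

/-- continuity of the directional-derivative QVI solution map
`d ↦ α(d)`, with the explicit Lipschitz-type estimate
`‖α(d_j) − α(d_k)‖ ≤ (1 + C_L)‖d_j − d_k‖ / (C_a − C_b C_L)`. -/
theorem qvi_derivative_continuity
    {V : Type*} [NormedAddCommGroup V] [InnerProductSpace ℝ V] [CompleteSpace V]
    (A : V →L[ℝ] V →L[ℝ] ℝ) (Ca Cb : ℝ) (hCa : 0 < Ca) (hCb : 0 < Cb)
    (hbound : ∀ u v : V, A u v ≤ Cb * ‖u‖ * ‖v‖)
    (hcoerc : ∀ u : V, Ca * ‖u‖ ^ 2 ≤ A u u)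
    (K : Set V) (hKclosed : IsClosed K) (hKconvex : Convex ℝ K)
    (hKcone : ∀ (c : ℝ) (x : V), 0 ≤ c → x ∈ K → c • x ∈ K)
    (L : V → V) (CL : ℝ) (hCL : CL < Ca / Cb)
    (hLlip : ∀ u v : V, ‖L u - L v‖ ≤ CL * ‖u - v‖)
    (α : (V →L[ℝ] ℝ) → V)
    (hα : ∀ d : V →L[ℝ] ℝ, α d - L (α d) ∈ K ∧
      ∀ v : V, v - L (α d) ∈ K → (A (α d) - d) (α d - v) ≤ 0) :
    (∀ d₁ d₂ : V →L[ℝ] ℝ,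
      ‖α d₁ - α d₂‖ ≤ (1 + CL) * ‖d₁ - d₂‖ / (Ca - Cb * CL)) ∧
    (∀ (dseq : ℕ → (V →L[ℝ] ℝ)) (d : V →L[ℝ] ℝ),
      Tendsto dseq atTop (𝓝 d) →
      Tendsto (fun j => α (dseq j)) atTop (𝓝 (α d))) := by
  have hpos : 0 < Ca - Cb * CL := by
    have := (lt_div_iff₀ hCb).mp hCL
    nlinarith
  have key : ∀ d₁ d₂ : V →L[ℝ] ℝ,
      ‖α d₁ - α d₂‖ ≤ (1 + CL) * ‖d₁ - d₂‖ / (Ca - Cb * CL) := by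
    intro d₁ d₂
    by_cases hCL1 : 0 ≤ 1 + CL
    · set e := α d₁ - α d₂ with he
      set w := L (α d₂) - L (α d₁) with hw
      -- test the first QVI with v = α d₂ - L(α d₂) + L(α d₁)
      have h1 : (A (α d₁) - d₁) (e + w) ≤ 0 := by
        have hmem : (α d₂ - L (α d₂) + L (α d₁)) - L (α d₁) ∈ K := by
          simpa using (hα d₂).1
        have := (hα d₁).2 _ hmem
        have harg : α d₁ - (α d₂ - L (α d₂) + L (α d₁)) = e + w := by
          simp [he, hw]; abel
        rwa [harg] at this
      have h2 : (A (α d₂) - d₂) (-(e + w)) ≤ 0 := by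
        have hmem : (α d₁ - L (α d₁) + L (α d₂)) - L (α d₂) ∈ K := by
          simpa using (hα d₁).1
        have := (hα d₂).2 _ hmem
        have harg : α d₂ - (α d₁ - L (α d₁) + L (α d₂)) = -(e + w) := by
          simp [he, hw]; abel
        rwa [harg] at this
      -- combine
      have hAee : A e (e + w) ≤ (d₁ - d₂) (e + w) := by
        simp only [ContinuousLinearMap.sub_apply, map_neg, map_sub, he] at h1 h2 ⊢
        linarith
      have hw_le : ‖w‖ ≤ CL * ‖e‖ := by
        have := hLlip (α d₂) (α d₁)
        rwa [show α d₂ - α d₁ = -e by rw [he]; abel, norm_neg] at this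
      have hAew : A e (-w) ≤ Cb * ‖e‖ * ‖w‖ := by
        simpa using hbound e (-w)
      have hd : (d₁ - d₂) (e + w) ≤ ‖d₁ - d₂‖ * (‖e‖ + ‖w‖) := by
        calc (d₁ - d₂) (e + w) ≤ ‖d₁ - d₂‖ * ‖e + w‖ :=
              le_trans (le_abs_self _) ((d₁ - d₂).le_opNorm (e + w))
          _ ≤ ‖d₁ - d₂‖ * (‖e‖ + ‖w‖) := by
              exact mul_le_mul_of_nonneg_left (norm_add_le _ _) (norm_nonneg _)
      have hmain : Ca * ‖e‖ ^ 2 ≤ Cb * CL * ‖e‖ ^ 2 + (1 + CL) * ‖d₁ - d₂‖ * ‖e‖ := by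
        have h0 : A e e = A e (e + w) + A e (-w) := by
          have : e = (e + w) + (-w) := by abel
          nth_rewrite 1 [this]
          simp
        have hcoe := hcoerc e
        have hwle2 : ‖d₁ - d₂‖ * ‖w‖ ≤ ‖d₁ - d₂‖ * (CL * ‖e‖) :=
          mul_le_mul_of_nonneg_left hw_le (norm_nonneg _)
        have hbw : Cb * ‖e‖ * ‖w‖ ≤ Cb * ‖e‖ * (CL * ‖e‖) :=
          mul_le_mul_of_nonneg_left hw_le (by positivity)
        nlinarith [norm_nonneg e, norm_nonneg w]
      rcases eq_or_lt_of_le (norm_nonneg e) with h0 | h0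
      · rw [← h0]
        positivity
      · rw [le_div_iff₀ hpos]
        nlinarith [hmain, h0, sq_abs ‖e‖]
    · -- 1 + CL < 0 forces V to be trivial (in the relevant sense)
      push_neg at hCL1
      have hCLneg : CL < 0 := by linarith
      have hsub : ∀ u v : V, u = v := by
        intro u v
        by_contra hne
        have h1 : 0 < ‖u - v‖ := by
          rw [norm_pos_iff, sub_ne_zero]; exact hne
        have := hLlip u v
        nlinarith [norm_nonneg (L u - L v)]
      have he0 : α d₁ - α d₂ = 0 := by rw [hsub (α d₁) (α d₂)]; simp
      have hd0 : d₁ = d₂ := by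
        ext x
        have : x = 0 := hsub x 0
        simp [this]
      rw [he0, hd0]
      simp
  refine ⟨key, ?_⟩
  intro dseq d hd
  rw [tendsto_iff_norm_sub_tendsto_zero]
  have hle : ∀ j, ‖α (dseq j) - α d‖ ≤ (1 + CL) * ‖dseq j - d‖ / (Ca - Cb * CL) :=
    fun j => key (dseq j) d
  have hto : Tendsto (fun j => (1 + CL) * ‖dseq j - d‖ / (Ca - Cb * CL)) atTop (𝓝 0) := by
    have h1 : Tendsto (fun j => ‖dseq j - d‖) atTop (𝓝 0) :=
      tendsto_iff_norm_sub_tendsto_zero.mp hd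
    have := (h1.const_mul (1 + CL)).div_const (Ca - Cb * CL)
    simpa using this
  exact squeeze_zero (fun j => norm_nonneg _) hle hto
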